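/- Let c_1, …, c_n be coins with types (a_i, b_i, x_i) satisfying a_i < b_i and 0 < x_i ≤ 1 for all i (i.e., only loser and fair coins), listed so that the types are in strictly increasing lexicographic order. If the dominance graph of these coins is a tournament on {1, …, n}, then this tournament is semiacyclic. -/

import Mathlib

open Finset

/-- The probability that coin `(a,b,x)` displays a strictly larger number than
coin `(a',b',x')`, when both are flipped independently. -/
noncomputable def winProb (a b x a' b' x' : ℝ) : ℝ :=
  (1 / (1 + x)) * (1 / (1 + x')) * (if a' < a then 1 else 0)
  + (1 / (1 + x)) * (x' / (1 + x')) * (if b' < a then 1 else 0)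
  + (x / (1 + x)) * (1 / (1 + x')) * (if a' < b then 1 else 0)
  + (x / (1 + x)) * (x' / (1 + x')) * (if b' < b then 1 else 0)

/-- Coin `(a,b,x)` dominates coin `(a',b',x')`: it is more likely to display the
strictly larger number. -/
def Dominates (a b x a' b' x' : ℝ) : Prop :=
  winProb a' b' x' a b x < winProb a b x a' b' x'

/-- A tournament: irreflexive, and for distinct vertices exactly one of the two
directed edges is present. -/
def IsTournament {V : Type*} (R : V → V → Prop) : Prop :=
  (∀ v, ¬ R v v) ∧ ∀ u v : V, u ≠ v → (R u v ↔ ¬ R v u)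

/-- A directed cycle `c 0 → c 1 → ⋯ → c (m-1) → c 0` in the digraph `R`:
the vertices are distinct and consecutive ones (cyclically) are joined by edges. -/
def IsCycle {V : Type*} (R : V → V → Prop) {m : ℕ} (c : Fin (m + 1) → V) : Prop :=
  Function.Injective c ∧ ∀ i : Fin (m + 1), R (c i) (c (i + 1))

/-- A cycle on linearly ordered vertices is ascending if it has at least as many
ascents as descents. -/
def IsAscendingCycle {α : Type*} [LinearOrder α] {m : ℕ} (c : Fin (m + 1) → α) : Prop :=
  (univ.filter (fun i : Fin (m + 1) => c (i + 1) < c i)).card ≤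
    (univ.filter (fun i : Fin (m + 1) => c i < c (i + 1))).card

/-- A digraph on a linearly ordered vertex set is semiacyclic if it contains no
ascending directed cycle. -/
def Semiacyclic {α : Type*} [LinearOrder α] (R : α → α → Prop) : Prop :=
  ∀ (m : ℕ) (c : Fin (m + 1) → α), IsCycle R c → ¬ IsAscendingCycle c

/-- Lexicographic order on coin types. -/
def TypeLt (a b x a' b' x' : ℝ) : Prop :=
  a < a' ∨ (a = a' ∧ b < b') ∨ (a = a' ∧ b = b' ∧ x < x')

/-- The 3-cycle tournament on `{0,1,2}` with `0 → 1`, `1 → 2`, `2 → 0`. -/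
def C3 (u v : Fin 3) : Prop := v = u + 1

/-- The direct product of two tournaments. -/
def TournProd {V₁ V₂ : Type*} (R₁ : V₁ → V₁ → Prop) (R₂ : V₂ → V₂ → Prop)
    (u v : V₁ × V₂) : Prop :=
  R₁ u.1 v.1 ∨ (u.1 = v.1 ∧ R₂ u.2 v.2)


/-- Numerator of `winProb` after clearing denominators. -/
noncomputable def Nv (a b x a' b' x' : ℝ) : ℝ :=
  (if a' < a then 1 else 0) + x' * (if b' < a then 1 else 0)
    + x * (if a' < b then 1 else 0) + x * x' * (if b' < b then 1 else 0)

private lemma winProb_eq {a b x a' b' x' : ℝ} (hx : 0 < x) (hx' : 0 < x') :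
    winProb a b x a' b' x' = Nv a b x a' b' x' / ((1 + x) * (1 + x')) := by
  have h1 : (1 : ℝ) + x ≠ 0 := by positivity
  have h2 : (1 : ℝ) + x' ≠ 0 := by positivity
  unfold winProb Nv
  generalize (if a' < a then (1:ℝ) else 0) = p
  generalize (if b' < a then (1:ℝ) else 0) = q
  generalize (if a' < b then (1:ℝ) else 0) = r
  generalize (if b' < b then (1:ℝ) else 0) = s
  field_simp

private lemma dom_iff {a b x a' b' x' : ℝ} (hx : 0 < x) (hx' : 0 < x') :
    Dominates a b x a' b' x' ↔ Nv a' b' x' a b x < Nv a b x a' b' x' := by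
  unfold Dominates
  rw [winProb_eq hx hx', winProb_eq hx' hx, mul_comm ((1:ℝ) + x') (1 + x)]
  exact div_lt_div_iff_of_pos_right (by positivity)

private lemma lemA {a b x a' b' x' : ℝ} (hx : 0 < x) (hx1 : x ≤ 1) (hx' : 0 < x')
    (hab : a < b) (hab' : a' < b') (haa : a < a') :
    ¬ Dominates a b x a' b' x' := by
  rw [dom_iff hx hx', not_lt]
  unfold Nv
  have h3 : a < b' := lt_trans haa hab'
  rw [if_neg (by linarith : ¬ a' < a), if_neg (by linarith : ¬ b' < a),
    if_pos haa, if_pos h3]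
  have hxx' : x * (1 + x') ≤ 1 * (1 + x') :=
    mul_le_mul_of_nonneg_right hx1 (by linarith)
  split_ifs <;> nlinarith

private lemma lemB {a b x b' x' : ℝ} (hx : 0 < x) (hx' : 0 < x')
    (hab : a < b) (hbb : b < b') (hd : Dominates a b x a b' x') :
    1 / x + 1 < 1 / x' := by
  rw [dom_iff hx hx'] at hd
  unfold Nv at hd
  rw [if_neg (lt_irrefl a), if_neg (by linarith : ¬ b' < a),
    if_neg (by linarith : ¬ b < a), if_pos hab, if_pos (by linarith : a < b'),
    if_neg (by linarith : ¬ b' < b), if_pos hbb] at hd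
  have key : x' * (1 + x) < x := by nlinarith
  have h1 : (1 : ℝ) / x + 1 = (1 + x) / x := by field_simp
  rw [h1, div_lt_div_iff₀ hx hx']
  nlinarith

private lemma lemB' {a b x x' : ℝ} (hx : 0 < x) (hx' : 0 < x')
    (hab : a < b) (hxx : x < x') : ¬ Dominates a b x a b x' := by
  rw [dom_iff hx hx', not_lt]
  unfold Nv
  rw [if_neg (lt_irrefl a), if_neg (by linarith : ¬ b < a), if_pos hab,
    if_neg (lt_irrefl b)]
  nlinarith

private lemma lemC {a b x b' x' : ℝ} (hx : 0 < x) (hx' : 0 < x')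
    (hab' : a < b') (hbb : b' < b) (hd : Dominates a b x a b' x') :
    1 / x - 1 < 1 / x' := by
  rw [dom_iff hx hx'] at hd
  unfold Nv at hd
  rw [if_neg (lt_irrefl a), if_neg (by linarith : ¬ b' < a),
    if_neg (by linarith : ¬ b < a), if_pos (by linarith : a < b), if_pos hab',
    if_pos hbb, if_neg (by linarith : ¬ b < b')] at hd
  have h1 : (1 : ℝ) / x - 1 = (1 - x) / x := by field_simp
  rw [h1, div_lt_div_iff₀ hx hx']
  nlinarith

/-- A set of loser and fair coins listed in increasing lexicographic order of
their types whose dominance graph is a tournament yields a semiacyclic tournament. -/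
theorem stmt10 {n : ℕ} (a b x : Fin n → ℝ)
    (hcoin : ∀ i, a i < b i ∧ 0 < x i ∧ x i ≤ 1)
    (hlex : ∀ i j : Fin n, i < j →
      TypeLt (a i) (b i) (x i) (a j) (b j) (x j))
    (htour : IsTournament
      (fun i j : Fin n => Dominates (a i) (b i) (x i) (a j) (b j) (x j))) :
    Semiacyclic
      (fun i j : Fin n => Dominates (a i) (b i) (x i) (a j) (b j) (x j)) := by
  rintro m c ⟨hinj, hedge⟩ hasc
  have hab : ∀ i, a i < b i := fun i => (hcoin i).1
  have hx : ∀ i, 0 < x i := fun i => (hcoin i).2.1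
  have hx1 : ∀ i, x i ≤ 1 := fun i => (hcoin i).2.2
  -- no self edges
  have hne : ∀ i : Fin (m + 1), c i ≠ c (i + 1) := by
    intro i h
    have hd : Dominates (a (c i)) (b (c i)) (x (c i)) (a (c (i + 1))) (b (c (i + 1))) (x (c (i + 1))) := hedge i
    rw [← h] at hd
    exact lt_irrefl _ hd
  -- the `a`-values are non-increasing along edges
  have hstep : ∀ i : Fin (m + 1), a (c (i + 1)) ≤ a (c i) := by
    intro i
    by_contra h
    push_neg at h
    exact lemA (hx _) (hx1 _) (hx _) (hab _) (hab _) h (hedge i)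
  -- hence constant around the cycle
  open Fin.NatCast Fin.CommRing in
  have key : ∀ k d : ℕ, a (c ((k + d : ℕ) : Fin (m + 1))) ≤ a (c ((k : ℕ) : Fin (m + 1))) := by
    intro k d
    induction d with
    | zero => simp
    | succ d ih =>
      have hc : ((k + (d + 1) : ℕ) : Fin (m + 1)) = ((k + d : ℕ) : Fin (m + 1)) + 1 := by
        push_cast; ring
      rw [hc]
      exact le_trans (hstep _) ih
  open Fin.NatCast Fin.CommRing in
  have haconst : ∀ i : Fin (m + 1), a (c i) = a (c 0) := by
    intro i
    have h1 : a (c i) ≤ a (c 0) := by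
      have := key 0 i.val
      simpa [Fin.cast_val_eq_self] using this
    have h2 : a (c 0) ≤ a (c i) := by
      have := key i.val (m + 1 - i.val)
      have hv : ((i.val + (m + 1 - i.val) : ℕ) : Fin (m + 1)) = 0 := by
        rw [Nat.add_sub_cancel' (le_of_lt i.isLt)]
        exact Fin.natCast_self _
      rw [hv] at this
      simpa [Fin.cast_val_eq_self] using this
    linarith
  -- the key per-edge inequality for 1/x
  have hEdge : ∀ i : Fin (m + 1),
      (if c i < c (i + 1) then (1 : ℝ) else -1) < 1 / x (c (i + 1)) - 1 / x (c i) := by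
    intro i
    have haeq : a (c i) = a (c (i + 1)) := by rw [haconst i, haconst (i + 1)]
    rcases lt_trichotomy (c i) (c (i + 1)) with hlt | heq | hgt
    · rw [if_pos hlt]
      have hd : Dominates (a (c i)) (b (c i)) (x (c i)) (a (c (i + 1))) (b (c (i + 1))) (x (c (i + 1))) := hedge i
      rw [← haeq] at hd
      rcases hlex _ _ hlt with h | ⟨_, hb⟩ | ⟨_, hbe, hxlt⟩
      · rw [haeq] at h; exact absurd h (lt_irrefl _)
      · have := lemB (hx _) (hx _) (hab (c i)) hb hd
        linarith
      · rw [← hbe] at hd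
        exact absurd hd (lemB' (hx _) (hx _) (hab _) hxlt)
    · exact absurd heq (hne i)
    · rw [if_neg (not_lt.2 hgt.le)]
      have hd : Dominates (a (c i)) (b (c i)) (x (c i)) (a (c (i + 1))) (b (c (i + 1))) (x (c (i + 1))) := hedge i
      rw [haeq] at hd
      rcases hlex _ _ hgt with h | ⟨_, hb⟩ | ⟨_, hbe, hxlt⟩
      · rw [haeq] at h; exact absurd h (lt_irrefl _)
      · have := lemC (hx _) (hx _) (haeq ▸ hab (c (i + 1))) hb hd
        linarith
      · have := one_div_lt_one_div_of_lt (hx (c (i + 1))) hxlt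
        linarith
  -- summing the differences around the cycle gives 0
  have hsum : ∑ i : Fin (m + 1), (1 / x (c (i + 1)) - 1 / x (c i)) = 0 := by
    rw [Finset.sum_sub_distrib]
    have h : ∑ i : Fin (m + 1), 1 / x (c (i + 1)) = ∑ i : Fin (m + 1), 1 / x (c i) :=
      Fintype.sum_equiv (Equiv.addRight 1) _ _ (fun i => rfl)
    rw [h, sub_self]
  have hlt : ∑ i : Fin (m + 1), (if c i < c (i + 1) then (1 : ℝ) else -1) < 0 := by
    rw [← hsum]
    exact Finset.sum_lt_sum_of_nonempty univ_nonempty (fun i _ => hEdge i)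
  -- but the ascending-cycle count says this sum is nonnegative
  have hfd : univ.filter (fun i : Fin (m + 1) => ¬ c i < c (i + 1))
      = univ.filter (fun i : Fin (m + 1) => c (i + 1) < c i) := by
    ext i
    simp only [Finset.mem_filter, Finset.mem_univ, true_and]
    constructor
    · intro h
      exact lt_of_le_of_ne (not_lt.1 h) (Ne.symm (hne i))
    · intro h
      exact not_lt.2 h.le
  have hcount : ∑ i : Fin (m + 1), (if c i < c (i + 1) then (1 : ℝ) else -1)
      = ((univ.filter (fun i : Fin (m + 1) => c i < c (i + 1))).card : ℝ)
        - ((univ.filter (fun i : Fin (m + 1) => c (i + 1) < c i)).card : ℝ) := by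
    rw [Finset.sum_ite, Finset.sum_const, Finset.sum_const, hfd]
    simp [nsmul_eq_mul]
    ring
  have hcard : ((univ.filter (fun i : Fin (m + 1) => c (i + 1) < c i)).card : ℝ)
      ≤ ((univ.filter (fun i : Fin (m + 1) => c i < c (i + 1))).card : ℝ) := by
    exact_mod_cast hasc
  linarith
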